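/- Let k ≥ 1 and let q₁, …, q_{k+1} be unit imaginary quaternions with q_i ≠ ±q_j whenever i ≠ j. In ℍ^{k+1}, let U_k be the real span of the standard basis vectors ε₁, …, ε_{k+1} together with the vectors e_j = q_j·ε_j + q_{j+1}·ε_{j+1} for j = 1, …, k. Then for every unit imaginary quaternion p, U_k ∩ p•U_k = 0; that is, the projection ℍ^{k+1} → ℍ^{k+1}/U_k defines a co-CR quaternionic vector space. -/

import Mathlib

open Quaternion

/-- Componentwise left multiplication by a quaternion `p` on `ℍ^n`, as a real-linear map. -/
noncomputable def mulLeftLM (n : ℕ) (p : Quaternion ℝ) :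
    (Fin n → Quaternion ℝ) →ₗ[ℝ] (Fin n → Quaternion ℝ) :=
  LinearMap.pi fun i => (LinearMap.mulLeft ℝ p).comp (LinearMap.proj i)

/-- The model subspace `U_k ⊆ ℍ^{k+1}`: the real span of the standard basis vectors
`ε₁, …, ε_{k+1}` together with the vectors `e_j = q_j·ε_j + q_{j+1}·ε_{j+1}`,
`j = 1, …, k`. -/
noncomputable def UkSub (k : ℕ) (q : Fin (k + 1) → Quaternion ℝ) :
    Submodule ℝ (Fin (k + 1) → Quaternion ℝ) :=
  Submodule.span ℝ
    ((Set.range fun i : Fin (k + 1) => Pi.single i (1 : Quaternion ℝ)) ∪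
     (Set.range fun j : Fin k =>
        Pi.single j.castSucc (q j.castSucc) + Pi.single j.succ (q j.succ)))

lemma imag_of_sq (p : Quaternion ℝ) (hp : p ^ 2 = -1) :
    p.re = 0 ∧ p.imI^2 + p.imJ^2 + p.imK^2 = 1 := by
  rw [pow_two] at hp
  have h0 := congrArg QuaternionAlgebra.re hp
  have h1 := congrArg QuaternionAlgebra.imI hp
  have h2 := congrArg QuaternionAlgebra.imJ hp
  have h3 := congrArg QuaternionAlgebra.imK hp
  simp [Quaternion.re_mul, Quaternion.imI_mul, Quaternion.imJ_mul, Quaternion.imK_mul] at h0 h1 h2 h3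
  have hre : p.re = 0 := by
    nlinarith [sq_nonneg p.re, sq_nonneg p.imI, sq_nonneg p.imJ, sq_nonneg p.imK]
  exact ⟨hre, by nlinarith [hre]⟩

lemma sq3_zero {x y z : ℝ} (h : x^2 + y^2 + z^2 = 0) : x = 0 ∧ y = 0 ∧ z = 0 := by
  refine ⟨?_, ?_, ?_⟩ <;>
    [ (have : x^2 = 0 := by nlinarith [sq_nonneg y, sq_nonneg z]);
      (have : y^2 = 0 := by nlinarith [sq_nonneg x, sq_nonneg z]);
      (have : z^2 = 0 := by nlinarith [sq_nonneg x, sq_nonneg y])] <;>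
    exact pow_eq_zero_iff (by norm_num) |>.mp this

lemma not_par (p q : Quaternion ℝ) (hp : p ^ 2 = -1) (hq : q ^ 2 = -1)
    (hpq : p ≠ q) (hpq' : p ≠ -q) :
    (1 : ℝ) - (p.imI*q.imI + p.imJ*q.imJ + p.imK*q.imK)^2 ≠ 0 := by
  obtain ⟨hpre, hpn⟩ := imag_of_sq p hp
  obtain ⟨hqre, hqn⟩ := imag_of_sq q hq
  set p1 := p.imI; set p2 := p.imJ; set p3 := p.imK
  set q1 := q.imI; set q2 := q.imJ; set q3 := q.imK
  set t : ℝ := p1*q1 + p2*q2 + p3*q3 with ht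
  intro hh
  have : (t - 1) * (t + 1) = 0 := by linear_combination -hh
  rcases mul_eq_zero.mp this with h' | h'
  · apply hpq
    have hsum : (p1-q1)^2 + (p2-q2)^2 + (p3-q3)^2 = 0 := by
      linear_combination hpn + hqn - 2*h'
    obtain ⟨d1, d2, d3⟩ := sq3_zero hsum
    ext
    · rw [hpre, hqre]
    · show p1 = q1; linarith
    · show p2 = q2; linarith
    · show p3 = q3; linarith
  · apply hpq'
    have hsum : (p1+q1)^2 + (p2+q2)^2 + (p3+q3)^2 = 0 := by
      linear_combination hpn + hqn + 2*h'
    obtain ⟨d1, d2, d3⟩ := sq3_zero hsum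
    ext
    · simp [hpre, hqre]
    · show p1 = (-q).imI; have hr : (-q).imI = -q1 := rfl; rw [hr]; linarith
    · show p2 = (-q).imJ; have hr : (-q).imJ = -q2 := rfl; rw [hr]; linarith
    · show p3 = (-q).imK; have hr : (-q).imK = -q3 := rfl; rw [hr]; linarith

lemma quat_indep (p q : Quaternion ℝ) (hp : p ^ 2 = -1) (hq : q ^ 2 = -1)
    (hpq : p ≠ q) (hpq' : p ≠ -q) (a c a' c' : ℝ)
    (h : algebraMap ℝ (Quaternion ℝ) a + c • q + a' • p + c' • (p * q) = 0) :
    a = 0 ∧ c = 0 ∧ a' = 0 ∧ c' = 0 := by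
  obtain ⟨hpre, hpn⟩ := imag_of_sq p hp
  obtain ⟨hqre, hqn⟩ := imag_of_sq q hq
  have hne := not_par p q hp hq hpq hpq'
  have e0 := congrArg QuaternionAlgebra.re h
  have e1 := congrArg QuaternionAlgebra.imI h
  have e2 := congrArg QuaternionAlgebra.imJ h
  have e3 := congrArg QuaternionAlgebra.imK h
  simp [Quaternion.re_mul, Quaternion.imI_mul, Quaternion.imJ_mul, Quaternion.imK_mul,
    hpre, hqre] at e0 e1 e2 e3
  set p1 := p.imI; set p2 := p.imJ; set p3 := p.imK
  set q1 := q.imI; set q2 := q.imJ; set q3 := q.imK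
  set t : ℝ := p1*q1 + p2*q2 + p3*q3 with ht
  rw [show (1:ℝ) - (p1*q1 + p2*q2 + p3*q3)^2 = 1 - t^2 from rfl] at hne
  have ec' : c' * (1 - t^2) = 0 := by
    linear_combination (p2*q3 - p3*q2) * e1 + (p3*q1 - p1*q3) * e2 + (p1*q2 - p2*q1) * e3
      - c' * (q1^2 + q2^2 + q3^2) * hpn - c' * hqn
  have ea : a * (1 - t^2) = 0 := by
    linear_combination (1 - t^2) * e0 + t * ec'
  have ec : c * (1 - t^2) = 0 := by
    linear_combination (q1 - t*p1) * e1 + (q2 - t*p2) * e2 + (q3 - t*p3) * e3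
      - c * hqn + a' * t * hpn
  have ea' : a' * (1 - t^2) = 0 := by
    linear_combination (p1 - t*q1) * e1 + (p2 - t*q2) * e2 + (p3 - t*q3) * e3
      - a' * hpn + c * t * hqn
  exact ⟨by rcases mul_eq_zero.mp ea with h|h; exacts [h, absurd h hne],
         by rcases mul_eq_zero.mp ec with h|h; exacts [h, absurd h hne],
         by rcases mul_eq_zero.mp ea' with h|h; exacts [h, absurd h hne],
         by rcases mul_eq_zero.mp ec' with h|h; exacts [h, absurd h hne]⟩

lemma mem_UkSub {k : ℕ} {q : Fin (k+1) → Quaternion ℝ} {x : Fin (k+1) → Quaternion ℝ}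
    (hx : x ∈ UkSub k q) :
    ∃ a c : Fin (k+1) → ℝ,
      (∀ i, x i = algebraMap ℝ (Quaternion ℝ) (a i) + c i • q i) ∧
      ∑ i : Fin (k+1), (-1 : ℝ)^(i : ℕ) * c i = 0 := by
  induction hx using Submodule.span_induction with
  | mem y hy =>
    rcases hy with ⟨i, rfl⟩ | ⟨j, rfl⟩
    · refine ⟨Pi.single i 1, 0, fun l => ?_, by simp⟩
      simp only [Pi.single_apply, Pi.zero_apply, zero_smul, add_zero]
      split_ifs <;> simp
    · have hne : j.castSucc ≠ j.succ := (Fin.castSucc_lt_succ).ne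
      refine ⟨0, Pi.single j.castSucc 1 + Pi.single j.succ 1, fun l => ?_, ?_⟩
      · simp only [Pi.add_apply, Pi.single_apply, Pi.zero_apply, map_zero, zero_add]
        by_cases h1 : l = j.castSucc
        · subst h1; simp [hne]
        · by_cases h2 : l = j.succ
          · subst h2; simp [Ne.symm hne, h1]
          · simp [h1, h2]
      · simp only [Pi.add_apply, Pi.single_apply, mul_add, Finset.sum_add_distrib,
          mul_ite, mul_one, mul_zero, Finset.sum_ite_eq', Finset.mem_univ, if_pos]
        simp [Fin.coe_castSucc, Fin.val_succ, pow_succ]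
  | zero => exact ⟨0, 0, by simp, by simp⟩
  | add u v hu hv ihu ihv =>
    obtain ⟨a, c, h1, h2⟩ := ihu
    obtain ⟨a', c', h1', h2'⟩ := ihv
    refine ⟨a + a', c + c', fun i => ?_, ?_⟩
    · simp only [Pi.add_apply, h1 i, h1' i, map_add, add_smul]; abel
    · simp only [Pi.add_apply, mul_add, Finset.sum_add_distrib, h2, h2', add_zero]
  | smul r u hu ihu =>
    obtain ⟨a, c, h1, h2⟩ := ihu
    refine ⟨r • a, r • c, fun i => ?_, ?_⟩
    · rw [Pi.smul_apply, h1 i, smul_add, smul_smul, Pi.smul_apply, Pi.smul_apply,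
        smul_eq_mul, smul_eq_mul, Algebra.smul_def, ← map_mul]
    · have : ∑ i : Fin (k+1), (-1:ℝ)^(i:ℕ) * (r • c) i
           = r * ∑ i : Fin (k+1), (-1:ℝ)^(i:ℕ) * c i := by
        rw [Finset.mul_sum]; exact Finset.sum_congr rfl fun i _ => by simp; ring
      rw [this, h2, mul_zero]

/-- For `k ≥ 1` and unit imaginary quaternions `q₁, …, q_{k+1}` with `q_i ≠ ±q_j`
(`i ≠ j`), the subspace `U_k ⊆ ℍ^{k+1}` satisfies `U_k ∩ p•U_k = 0` for every unit
imaginary quaternion `p`; that is, the projection `ℍ^{k+1} → ℍ^{k+1}/U_k` defines a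
co-CR quaternionic vector space. -/
theorem stmt10 (k : ℕ) (hk : 1 ≤ k) (q : Fin (k + 1) → Quaternion ℝ)
    (hq : ∀ i, q i ^ 2 = -1)
    (hq' : ∀ i j, i ≠ j → q i ≠ q j ∧ q i ≠ -q j)
    (p : Quaternion ℝ) (hp : p ^ 2 = -1) :
    UkSub k q ⊓ (UkSub k q).map (mulLeftLM (k + 1) p) = ⊥ := by
  rw [eq_bot_iff]
  rintro x ⟨hxU, y, hyU, rfl⟩
  rw [Submodule.mem_bot]
  obtain ⟨a, c, hac, hcs⟩ := mem_UkSub hxU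
  obtain ⟨a', c', hac', hcs'⟩ := mem_UkSub hyU
  have happ : ∀ i, (mulLeftLM (k+1) p) y i = p * y i := fun i => rfl
  have hpre : p.re = 0 := (imag_of_sq p hp).1
  have hp0 : p ≠ 0 := by
    intro h0; rw [h0] at hp; norm_num at hp
  -- the componentwise equation
  have heq : ∀ i, algebraMap ℝ (Quaternion ℝ) (a i) + c i • q i
      + (-(a' i)) • p + (-(c' i)) • (p * q i) = 0 := by
    intro i
    have h5 : p * (algebraMap ℝ (Quaternion ℝ) (a' i) + c' i • q i)
        = a' i • p + c' i • (p * q i) := by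
      rw [mul_add, mul_smul_comm]
      congr 1
      rw [← Algebra.commutes, Algebra.smul_def]
    have hxi : a' i • p + c' i • (p * q i)
        = algebraMap ℝ (Quaternion ℝ) (a i) + c i • q i := by
      rw [← h5, ← hac' i, ← happ i, hac i]
    rw [neg_smul, neg_smul]
    rw [← hxi]
    abel
  have key : ∀ i, p ≠ q i → p ≠ -q i →
      a i = 0 ∧ c i = 0 ∧ a' i = 0 ∧ c' i = 0 := by
    intro i h1 h2
    obtain ⟨za, zc, za', zc'⟩ := quat_indep p (q i) hp (hq i) h1 h2 _ _ _ _ (heq i)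
    exact ⟨za, zc, neg_eq_zero.mp za', neg_eq_zero.mp zc'⟩
  by_cases hcase : ∃ i0, p = q i0 ∨ p = -q i0
  · obtain ⟨i0, hi0⟩ := hcase
    have hzero : ∀ i, i ≠ i0 → a i = 0 ∧ c i = 0 ∧ a' i = 0 ∧ c' i = 0 := by
      intro i hi
      have hqq := hq' i i0 hi
      apply key
      · rcases hi0 with h | h
        · rw [h]; exact fun hc => hqq.1 hc.symm
        · rw [h]; exact fun hc => hqq.2 hc.symm
      · rcases hi0 with h | h
        · rw [h]; exact fun hc => hqq.2 (neg_eq_iff_eq_neg.mp hc.symm)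
        · rw [h]; exact fun hc => hqq.1 (neg_injective hc).symm
    have hc0 : c i0 = 0 := by
      have := hcs
      rw [Finset.sum_eq_single i0 (fun i _ hi => by rw [(hzero i hi).2.1, mul_zero])
        (fun h => absurd (Finset.mem_univ i0) h)] at this
      have hne : ((-1:ℝ))^(i0:ℕ) ≠ 0 := by positivity
      exact (mul_eq_zero.mp this).resolve_left hne
    have hc0' : c' i0 = 0 := by
      have := hcs'
      rw [Finset.sum_eq_single i0 (fun i _ hi => by rw [(hzero i hi).2.2.2, mul_zero])
        (fun h => absurd (Finset.mem_univ i0) h)] at this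
      have hne : ((-1:ℝ))^(i0:ℕ) ≠ 0 := by positivity
      exact (mul_eq_zero.mp this).resolve_left hne
    have hi0eq := heq i0
    rw [hc0, hc0'] at hi0eq
    simp only [zero_smul, add_zero, neg_zero, neg_smul] at hi0eq
    -- hi0eq : algebraMap (a i0) + (-(a' i0)) • p = 0  (or similar)
    have ha0 : a i0 = 0 := by
      have := congrArg QuaternionAlgebra.re hi0eq
      simpa [hpre] using this
    have ha0' : a' i0 = 0 := by
      rw [ha0] at hi0eq
      simp only [map_zero, zero_add] at hi0eq
      rcases smul_eq_zero.mp (neg_eq_zero.mp hi0eq) with h | h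
      · exact h
      · exact absurd h hp0
    funext i
    rw [happ i, Pi.zero_apply]
    by_cases hi : i = i0
    · subst hi
      rw [← happ i, hac i, ha0, hc0]
      simp
    · obtain ⟨za, zc, _, _⟩ := hzero i hi
      rw [← happ i, hac i, za, zc]
      simp
  · push_neg at hcase
    funext i
    have h := hcase i
    obtain ⟨za, zc, _, _⟩ := key i h.1 h.2
    rw [happ i, Pi.zero_apply, ← happ i, hac i, za, zc]
    simp
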